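/- Assume additionally that u is radial (u(x) depends only on |x|_p), that α > 0, and that Σ_{j=i}^{∞} p^{−j(α+1)}·V_j < ∞ for every i ∈ ℤ. Then for every i ∈ ℤ and every x ∈ ℚ_p the function y ↦ u(y)·(φ_i(y) − φ_i(x))/|x − y|_p^{α+1} is μ-integrable on ℚ_p and ∫_{ℚ_p} u(y)·(φ_i(y) − φ_i(x))/|x − y|_p^{α+1} dμ(y) = κ_i·φ_i(x), where κ_i = −(1 − p^{−(α+1)})·Σ_{j=i}^{∞} p^{−j(α+1)}·V_j; that is, the functions φ_i are eigenfunctions of the Vladimirov operator with measure u(y)dμ(y), with eigenvalues κ_i. -/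

import Mathlib

open MeasureTheory

/-- `Ω(r) = 1` for `r ≤ 1` and `Ω(r) = 0` for `r > 1`. -/
noncomputable def Omega (r : ℝ) : ℝ := if r ≤ 1 then 1 else 0

section Aux
variable {p : ℕ} [hpfact : Fact p.Prime]

lemma aux_hp1 : (1:ℝ) < p := Nat.one_lt_cast.mpr (Fact.out : p.Prime).one_lt

lemma aux_shell (j : ℤ) (y : ℚ_[p]) (h1 : (p:ℝ)^(j-1) < ‖y‖) (h2 : ‖y‖ ≤ (p:ℝ)^j) :
    ‖y‖ = (p:ℝ)^j := by
  have hp1 : (1:ℝ) < p := aux_hp1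
  have hy0 : y ≠ 0 := by
    intro h
    rw [h, norm_zero] at h1
    exact absurd h1 (not_lt.mpr (zpow_pos (by linarith) _).le)
  rw [Padic.norm_eq_zpow_neg_valuation hy0] at h1 h2 ⊢
  have e1 : j - 1 < -y.valuation := (zpow_lt_zpow_iff_right₀ hp1).mp h1
  have e2 : -y.valuation ≤ j := (zpow_le_zpow_iff_right₀ hp1).mp h2
  congr 1
  omega

lemma aux_ultra (z w : ℚ_[p]) (h : ‖z‖ < ‖w‖) : ‖z - w‖ = ‖w‖ := by
  rw [sub_eq_add_neg, Padic.add_eq_max_of_ne (by rw [norm_neg]; exact h.ne),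
    norm_neg]
  exact max_eq_right h.le

omit hpfact in
lemma aux_omega (t : ℝ) (j : ℤ) (h : (0:ℝ) < (p:ℝ)^j) :
    Omega (t * (p:ℝ)^(-j)) = if t ≤ (p:ℝ)^j then 1 else 0 := by
  unfold Omega
  congr 1
  simp only [zpow_neg, ← div_eq_mul_inv, div_le_one h, eq_iff_iff]

omit hpfact in
lemma aux_rpow (j : ℤ) (z w : ℝ) (hp0 : (0:ℝ) < p) (hw : w = (p:ℝ)^j) (α : ℝ) :
    z / w ^ (α+1) = z * (p:ℝ) ^ (-(j:ℝ) * (α+1)) := by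
  rw [hw, ← Real.rpow_intCast (p:ℝ) j, ← Real.rpow_mul hp0.le, neg_mul,
    Real.rpow_neg hp0.le, div_eq_mul_inv]

end Aux


/-- for radial `u`, the functions `φ_i` are eigenfunctions of the Vladimirov
operator with measure `u(y)dμ(y)`, with eigenvalues
`κ_i = -(1 - p^{-(α+1)}) Σ_{j=i}^∞ p^{-j(α+1)} V_j`. -/
theorem padic_basis_eigenfunctions
    (p : ℕ) [Fact p.Prime]
    [MeasurableSpace ℚ_[p]] [BorelSpace ℚ_[p]]
    (μ : Measure ℚ_[p]) [μ.IsAddHaarMeasure]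
    (hμ : μ (Metric.closedBall 0 1) = 1)
    (u : ℚ_[p] → ℝ) (hu_pos : ∀ x : ℚ_[p], 0 < u x)
    (hu_loc : LocallyIntegrable u μ)
    (hu_radial : ∀ x y : ℚ_[p], ‖x‖ = ‖y‖ → u x = u y)
    (α : ℝ) (hα : 0 < α)
    (V : ℤ → ℝ)
    (hVint : ∀ i : ℤ, Integrable (fun y : ℚ_[p] => u y * Omega (‖y‖ * (p : ℝ) ^ (-i))) μ)
    (hV : ∀ i : ℤ, V i = ∫ y : ℚ_[p], u y * Omega (‖y‖ * (p : ℝ) ^ (-i)) ∂μ)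
    (hVmono : ∀ i : ℤ, V (i - 1) < V i)
    (hVsum : ∀ i : ℤ, Summable (fun n : ℕ =>
      (p : ℝ) ^ (-(((i + n : ℤ) : ℝ)) * (α + 1)) * V (i + n)))
    (φ : ℤ → ℚ_[p] → ℝ)
    (hφ : ∀ (i : ℤ) (x : ℚ_[p]), φ i x =
      (V (i - 1) * (1 - V (i - 1) / V i)) ^ (-(1 / 2 : ℝ)) *
        (Omega (‖x‖ * (p : ℝ) ^ (-i + 1)) - V (i - 1) / V i * Omega (‖x‖ * (p : ℝ) ^ (-i)))) :
    ∀ (i : ℤ) (x : ℚ_[p]),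
      Integrable (fun y : ℚ_[p] => u y * (φ i y - φ i x) / ‖x - y‖ ^ (α + 1)) μ ∧
      ∫ y : ℚ_[p], u y * (φ i y - φ i x) / ‖x - y‖ ^ (α + 1) ∂μ =
        (-(1 - (p : ℝ) ^ (-(α + 1))) *
          ∑' n : ℕ, (p : ℝ) ^ (-(((i + n : ℤ) : ℝ)) * (α + 1)) * V (i + n)) * φ i x := by
  intro i x
  have hp1 : (1:ℝ) < p := aux_hp1
  have hp0 : (0:ℝ) < p := by linarith
  have hzpos : ∀ j : ℤ, (0:ℝ) < (p:ℝ)^j := fun j => zpow_pos hp0 j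
  set c : ℝ := (V (i - 1) * (1 - V (i - 1) / V i)) ^ (-(1 / 2 : ℝ)) with hc
  set r : ℝ := V (i - 1) / V i with hrdef
  set g : ℚ_[p] → ℝ := fun y => u y * (φ i y - φ i x) / ‖x - y‖ ^ (α + 1) with hg
  set e : ℤ → ℝ := fun m => (p:ℝ) ^ (-(m:ℝ) * (α + 1)) with he
  set q : ℝ := (p:ℝ) ^ (-(α+1)) with hq
  set a : ℝ := c * (1 - r) with ha
  set b : ℝ := -(c * r) with hb
  set W : ℤ → ℝ := fun j => ∑' n : ℕ, (p : ℝ) ^ (-(((j + n : ℤ) : ℝ)) * (α + 1)) * V (j + n)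
    with hW
  -- φ value lemmas
  have hφ' : ∀ y : ℚ_[p], φ i y =
      c * ((if ‖y‖ ≤ (p:ℝ)^(i-1) then (1:ℝ) else 0) - r * (if ‖y‖ ≤ (p:ℝ)^i then (1:ℝ) else 0)) := by
    intro y
    rw [hφ i y, show (-i + 1 : ℤ) = -(i-1) by ring, aux_omega _ _ (hzpos (i-1)),
      aux_omega _ _ (hzpos i)]
  have hφa : ∀ y : ℚ_[p], ‖y‖ ≤ (p:ℝ)^(i-1) → φ i y = a := by
    intro y hy
    have h2 : ‖y‖ ≤ (p:ℝ)^i := hy.trans ((zpow_le_zpow_iff_right₀ hp1).mpr (by omega))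
    rw [hφ' y, if_pos hy, if_pos h2, ha]
    ring
  have hφb : ∀ y : ℚ_[p], (p:ℝ)^(i-1) < ‖y‖ → ‖y‖ ≤ (p:ℝ)^i → φ i y = b := by
    intro y h1 h2
    rw [hφ' y, if_neg (not_le.mpr h1), if_pos h2, hb]
    ring
  have hφ0 : ∀ y : ℚ_[p], (p:ℝ)^i < ‖y‖ → φ i y = 0 := by
    intro y h2
    have h1 : (p:ℝ)^(i-1) < ‖y‖ :=
      lt_of_le_of_lt ((zpow_le_zpow_iff_right₀ hp1).mpr (by omega)) h2
    rw [hφ' y, if_neg (not_le.mpr h1), if_neg (not_le.mpr h2)]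
    ring
  -- the critical radius k
  set k : ℤ := if ‖x‖ ≤ (p:ℝ)^i then i else -x.valuation with hk
  have hkx : ¬(‖x‖ ≤ (p:ℝ)^i) → ‖x‖ = (p:ℝ)^k := by
    intro h
    rw [hk, if_neg h]
    refine Padic.norm_eq_zpow_neg_valuation ?_
    intro h0
    rw [h0, norm_zero] at h
    exact h (hzpos i).le
  have hxk : ‖x‖ ≤ (p:ℝ)^k := by
    by_cases hxi : ‖x‖ ≤ (p:ℝ)^i
    · rw [hk, if_pos hxi]; exact hxi
    · exact (hkx hxi).le
  have hki : i ≤ k := by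
    by_cases hxi : ‖x‖ ≤ (p:ℝ)^i
    · rw [hk, if_pos hxi]
    · have h1 : (p:ℝ)^i < (p:ℝ)^k := lt_of_lt_of_le (not_le.mp hxi) (hkx hxi).le
      exact ((zpow_lt_zpow_iff_right₀ hp1).mp h1).le
  have hk3 : (p:ℝ)^(i-1) < ‖x‖ → ‖x‖ = (p:ℝ)^k := by
    intro h
    by_cases hxi : ‖x‖ ≤ (p:ℝ)^i
    · rw [hk, if_pos hxi]; exact aux_shell i x h hxi
    · exact hkx hxi
  -- balls
  set Bs : ℤ → Set ℚ_[p] := fun j => {y | ‖y‖ ≤ (p:ℝ)^j} with hBs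
  have hmeas : ∀ j, MeasurableSet (Bs j) :=
    fun j => (isClosed_le continuous_norm continuous_const).measurableSet
  have hBsub : ∀ {m l : ℤ}, m ≤ l → Bs m ⊆ Bs l := by
    intro m l h y hy
    exact le_trans hy ((zpow_le_zpow_iff_right₀ hp1).mpr h)
  have hind : ∀ j : ℤ, (fun y : ℚ_[p] => u y * Omega (‖y‖ * (p:ℝ)^(-j))) = (Bs j).indicator u := by
    intro j
    funext y
    rw [aux_omega _ _ (hzpos j)]
    by_cases h : ‖y‖ ≤ (p:ℝ)^j
    · rw [if_pos h, mul_one]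
      exact (Set.indicator_of_mem (show y ∈ Bs j from h) u).symm
    · rw [if_neg h, mul_zero]
      exact (Set.indicator_of_notMem (show y ∉ Bs j from h) u).symm
  have huint : ∀ j, IntegrableOn u (Bs j) μ :=
    fun j => (integrable_indicator_iff (hmeas j)).mp (hind j ▸ hVint j)
  have huV : ∀ j, ∫ y in Bs j, u y ∂μ = V j := by
    intro j
    rw [hV j, hind j, integral_indicator (hmeas j)]
  have hV0 : ∀ j, 0 ≤ V j := by
    intro j
    rw [← huV j]
    exact setIntegral_nonneg (hmeas j) (fun y _ => (hu_pos y).le)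
  have hVi : 0 < V i := lt_of_le_of_lt (hV0 (i-1)) (hVmono i)
  have hrV : r * V i = V (i - 1) := div_mul_cancel₀ _ hVi.ne'
  have hmean : a * V (i-1) + b * (V i - V (i-1)) = 0 := by
    rw [ha, hb]
    have : c * (1 - r) * V (i-1) + -(c * r) * (V i - V (i-1)) = c * (V (i-1) - r * V i) := by
      ring
    rw [this, hrV, sub_self, mul_zero]
  -- generic computation on a region where g = C * u
  have hsetcalc : ∀ (s : Set ℚ_[p]) (C : ℝ), MeasurableSet s → IntegrableOn u s μ →
      (∀ y ∈ s, g y = C * u y) →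
      IntegrableOn g s μ ∧ (∫ y in s, g y ∂μ) = C * ∫ y in s, u y ∂μ ∧
        (∫ y in s, ‖g y‖ ∂μ) = |C| * ∫ y in s, u y ∂μ := by
    intro s C hs hus h
    have h1 : IntegrableOn (fun y => C * u y) s μ := hus.const_mul C
    refine ⟨h1.congr_fun (fun y hy => (h y hy).symm) hs, ?_, ?_⟩
    · rw [setIntegral_congr_fun hs (fun y hy => h y hy), integral_const_mul]
    · rw [setIntegral_congr_fun hs (g := fun y => |C| * u y) ?_, integral_const_mul]
      intro y hy
      show ‖g y‖ = |C| * u y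
      rw [h y hy, Real.norm_eq_abs, abs_mul, abs_of_pos (hu_pos y)]
  -- region lemmas
  have hzero : ∀ y : ℚ_[p], φ i y = φ i x → g y = 0 := by
    intro y hy
    rw [hg]
    simp only [hy, sub_self, mul_zero, zero_div]
  have hR0 : ∀ y ∈ Bs (i-1), g y = ((a - φ i x) * e k) * u y := by
    intro y hy
    have hy' : ‖y‖ ≤ (p:ℝ)^(i-1) := hy
    have hφy : φ i y = a := hφa y hy'
    by_cases hxa : φ i x = a
    · rw [hzero y (by rw [hφy, hxa]), hxa, sub_self, zero_mul, zero_mul]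
    · have hx1 : (p:ℝ)^(i-1) < ‖x‖ := not_le.mp (fun h => hxa (hφa x h))
      have hnorm : ‖x - y‖ = (p:ℝ)^k := by
        rw [show x - y = -(y - x) by ring, norm_neg,
          aux_ultra y x (lt_of_le_of_lt hy' hx1)]
        exact hk3 hx1
      show u y * (φ i y - φ i x) / ‖x - y‖ ^ (α + 1) = (a - φ i x) * e k * u y
      rw [hφy, hnorm, aux_rpow k _ _ hp0 rfl α]
      simp only [he]
      ring
  have hR1 : ∀ y ∈ Bs i \ Bs (i-1), g y = ((b - φ i x) * e k) * u y := by
    rintro y ⟨hy1, hy2⟩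
    have hy1' : ‖y‖ ≤ (p:ℝ)^i := hy1
    have hy2' : (p:ℝ)^(i-1) < ‖y‖ := not_le.mp hy2
    have hφy : φ i y = b := hφb y hy2' hy1'
    by_cases hxb : φ i x = b
    · rw [hzero y (by rw [hφy, hxb]), hxb, sub_self, zero_mul, zero_mul]
    · have hnorm : ‖x - y‖ = (p:ℝ)^k := by
        by_cases hxi : ‖x‖ ≤ (p:ℝ)^i
        · have hxs : ‖x‖ ≤ (p:ℝ)^(i-1) := by
            by_contra h
            exact hxb (hφb x (not_le.mp h) hxi)
          rw [aux_ultra x y (lt_of_le_of_lt hxs hy2'), aux_shell i y hy2' hy1', hk, if_pos hxi]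
        · have hxy : ‖y‖ < ‖x‖ := lt_of_le_of_lt hy1' (not_le.mp hxi)
          rw [show x - y = -(y - x) by ring, norm_neg, aux_ultra y x hxy]
          exact hkx hxi
      show u y * (φ i y - φ i x) / ‖x - y‖ ^ (α + 1) = (b - φ i x) * e k * u y
      rw [hφy, hnorm, aux_rpow k _ _ hp0 rfl α]
      simp only [he]
      ring
  have hR2 : ∀ y ∈ Bs k \ Bs i, g y = ((0 - φ i x) * e k) * u y := by
    rintro y ⟨hy1, hy2⟩
    have hφy : φ i y = 0 := hφ0 y (not_le.mp hy2)
    by_cases hx0 : φ i x = 0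
    · rw [hzero y (by rw [hφy, hx0]), hx0, sub_self, zero_mul, zero_mul]
    · have hxi : ‖x‖ ≤ (p:ℝ)^i := by
        by_contra h
        exact hx0 (hφ0 x (not_le.mp h))
      have hik : k = i := by rw [hk, if_pos hxi]
      exact absurd (hik ▸ hy1) hy2
  have hRt : ∀ (j : ℤ), k < j → ∀ y ∈ Bs j \ Bs (j-1), g y = ((0 - φ i x) * e j) * u y := by
    rintro j hj y ⟨hy1, hy2⟩
    have hyn : ‖y‖ = (p:ℝ)^j := aux_shell j y (not_le.mp hy2) hy1
    have hky : (p:ℝ)^k < (p:ℝ)^j := (zpow_lt_zpow_iff_right₀ hp1).mpr hj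
    have hφy : φ i y = 0 := by
      refine hφ0 y ?_
      rw [hyn]
      exact lt_of_le_of_lt ((zpow_le_zpow_iff_right₀ hp1).mpr hki) hky
    have hxy : ‖x‖ < ‖y‖ := by
      rw [hyn]
      exact lt_of_le_of_lt hxk hky
    have hnorm : ‖x - y‖ = (p:ℝ)^j := by rw [aux_ultra x y hxy]; exact hyn
    show u y * (φ i y - φ i x) / ‖x - y‖ ^ (α + 1) = (0 - φ i x) * e j * u y
    rw [hφy, hnorm, aux_rpow j _ _ hp0 rfl α]
    simp only [he]
    ring
  -- the exhausting family
  set γ : ℕ → ℤ := fun n => if n = 0 then i - 1 else if n = 1 then i else k + ((n - 2 : ℕ) : ℤ)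
    with hγ
  have hγ0 : γ 0 = i - 1 := by simp [hγ]
  have hγ1 : γ 1 = i := by simp [hγ]
  have hγ2 : γ 2 = k := by norm_num [hγ]
  have hγs : ∀ n : ℕ, γ (n + 3) = k + 1 + n := by
    intro n
    have h2 : (n + 3 : ℕ) - 2 = n + 1 := by omega
    simp only [hγ, if_neg (by omega : ¬ n + 3 = 0), if_neg (by omega : ¬ n + 3 = 1), h2]
    push_cast
    ring
  have hγp : ∀ n : ℕ, γ (n + 2) = k + n := by
    intro n
    rcases n with _ | m
    · rw [hγ2]; norm_num
    · rw [hγs m]; push_cast; ring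
  have hγmono : Monotone γ := by
    apply monotone_nat_of_le_succ
    intro n
    match n with
    | 0 => rw [hγ0, hγ1]; omega
    | 1 => rw [hγ1, hγ2]; exact hki
    | (m+2) => rw [hγp m, hγp (m+1)]; push_cast; omega
  set A : ℕ → Set ℚ_[p] := fun n => Bs (γ n) with hA
  set F : ℕ → Set ℚ_[p] := disjointed A with hF
  have hAmono : Monotone A := fun m n h => hBsub (hγmono h)
  have hF0 : F 0 = Bs (i - 1) := by rw [hF, disjointed_zero]; simp only [hA]; rw [hγ0]
  have hFsucc : ∀ n : ℕ, F (n+1) = Bs (γ (n+1)) \ Bs (γ n) := by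
    intro n
    rw [hF, hAmono.disjointed_add_one]
  have hFmeas : ∀ n, MeasurableSet (F n) :=
    MeasurableSet.disjointed (fun n => hmeas _)
  have hFdisj : Pairwise (Function.onFun Disjoint F) := disjoint_disjointed A
  have hFunion : ⋃ n, F n = Set.univ := by
    rw [hF, iUnion_disjointed]
    apply Set.eq_univ_of_forall
    intro y
    by_cases hyk : ‖y‖ ≤ (p:ℝ)^k
    · refine Set.mem_iUnion.mpr ⟨2, ?_⟩
      show y ∈ Bs (γ 2)
      rw [hγ2]
      exact hyk
    · have hy0 : y ≠ 0 := by
        intro h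
        rw [h, norm_zero] at hyk
        exact hyk (hzpos k).le
      have hyv : ‖y‖ = (p:ℝ)^(-y.valuation) := Padic.norm_eq_zpow_neg_valuation hy0
      have hkj : k < -y.valuation := by
        rw [hyv] at hyk
        exact (zpow_lt_zpow_iff_right₀ hp1).mp (not_le.mp hyk)
      refine Set.mem_iUnion.mpr ⟨(-y.valuation - k).toNat + 2, ?_⟩
      have hγval : γ ((-y.valuation - k).toNat + 2) = -y.valuation := by
        rw [hγp]
        rw [Int.toNat_of_nonneg (by omega)]
        ring
      show y ∈ Bs (γ _)
      rw [hγval]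
      exact hyv.le
  -- per-piece constants and u-integrals
  set C : ℕ → ℝ := fun n =>
    ((if n = 0 then a else if n = 1 then b else 0) - φ i x) * e (if n ≤ 2 then k else γ n)
    with hC
  set M : ℕ → ℝ := fun n => if n = 0 then V (i-1) else V (γ n) - V (γ (n-1)) with hM
  have huVdiff : ∀ {m l : ℤ}, m ≤ l → (∫ y in Bs l \ Bs m, u y ∂μ) = V l - V m := by
    intro m l h
    rw [integral_diff (hmeas m) (huint l) (hBsub h), huV, huV]
  have hC0 : C 0 = (a - φ i x) * e k := by norm_num [hC]
  have hC1 : C 1 = (b - φ i x) * e k := by norm_num [hC]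
  have hC2 : C 2 = (0 - φ i x) * e k := by norm_num [hC]
  have hC3 : ∀ n : ℕ, C (n + 3) = (0 - φ i x) * e (k + 1 + n) := by
    intro n
    simp only [hC, if_neg (by omega : ¬ n + 3 = 0), if_neg (by omega : ¬ n + 3 = 1),
      if_neg (by omega : ¬ n + 3 ≤ 2), hγs n]
  have hM0 : M 0 = V (i - 1) := by norm_num [hM]
  have hM1 : M 1 = V i - V (i - 1) := by norm_num [hM, hγ1, hγ0]
  have hM2 : M 2 = V k - V i := by norm_num [hM, hγ2, hγ1]
  have hM3 : ∀ n : ℕ, M (n + 3) = V (k + 1 + n) - V (k + n) := by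
    intro n
    have h1 : (n + 3 : ℕ) - 1 = n + 2 := by omega
    simp only [hM, if_neg (by omega : ¬ n + 3 = 0), h1, hγs n, hγp n]
  have hpiece : ∀ n : ℕ, IntegrableOn g (F n) μ ∧ (∫ y in F n, g y ∂μ) = C n * M n ∧
      (∫ y in F n, ‖g y‖ ∂μ) = |C n| * M n := by
    intro n
    match n with
    | 0 =>
      have h := hsetcalc (Bs (i-1)) ((a - φ i x) * e k) (hmeas _) (huint _) hR0
      rw [hF0, hC0, hM0, ← huV (i-1)]
      exact h
    | 1 =>
      have h := hsetcalc (Bs i \ Bs (i-1)) ((b - φ i x) * e k)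
        ((hmeas i).diff (hmeas (i-1))) ((huint i).mono_set Set.diff_subset) hR1
      rw [hFsucc 0, hγ1, hγ0, hC1, hM1, ← huVdiff (by omega : (i:ℤ) - 1 ≤ i)]
      exact h
    | 2 =>
      have h := hsetcalc (Bs k \ Bs i) ((0 - φ i x) * e k)
        ((hmeas k).diff (hmeas i)) ((huint k).mono_set Set.diff_subset) hR2
      rw [hFsucc 1, hγ2, hγ1, hC2, hM2, ← huVdiff hki]
      exact h
    | (m+3) =>
      have hlt : k < k + 1 + m := by omega
      have hsub : k + 1 + (m : ℤ) - 1 = k + m := by omega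
      have h := hsetcalc (Bs (k+1+m) \ Bs (k+1+m-1)) ((0 - φ i x) * e (k+1+m))
        ((hmeas _).diff (hmeas _)) ((huint _).mono_set Set.diff_subset)
        (hRt (k+1+m) hlt)
      rw [hFsucc (m+2), hγs m, show γ (m + 2) = k + 1 + (m:ℤ) - 1 by rw [hγp m]; omega,
        hC3 m, hM3 m, show k + (m:ℤ) = k + 1 + m - 1 by omega,
        ← huVdiff (by omega : k + 1 + (m:ℤ) - 1 ≤ k + 1 + m)]
      exact h
  -- summability
  have hepos : ∀ m : ℤ, 0 < e m := by
    intro m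
    simp only [he]
    exact Real.rpow_pos_of_pos hp0 _
  have hqe : ∀ m : ℤ, e (m + 1) = q * e m := by
    intro m
    simp only [he, hq]
    rw [← Real.rpow_add hp0]
    congr 1
    push_cast
    ring
  have he1 : Summable (fun n : ℕ => e (k+1+n) * V (k+1+n)) := by
    simp only [he]
    exact hVsum (k+1)
  have hek : Summable (fun n : ℕ => e (k+n) * V (k+n)) := by
    simp only [he]
    exact hVsum k
  have he2 : Summable (fun n : ℕ => e (k+1+n) * V (k+n)) := by
    refine (hek.mul_left q).congr ?_
    intro n
    rw [show k+1+(n:ℤ) = (k+(n:ℤ))+1 by ring, hqe]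
    ring
  have htail : Summable (fun n : ℕ => e (k+1+n) * (V (k+1+n) - V (k+n))) :=
    (he1.sub he2).congr (fun n => by ring)
  have hsummableNorm : Summable (fun n : ℕ => ∫ y in F n, ‖g y‖ ∂μ) := by
    apply (summable_nat_add_iff 3).mp
    refine (htail.mul_left |φ i x|).congr ?_
    intro n
    rw [(hpiece (n+3)).2.2, hC3 n, hM3 n, abs_mul, zero_sub, abs_neg, abs_of_pos (hepos _)]
    ring
  have hUint : IntegrableOn g (⋃ n, F n) μ :=
    integrableOn_iUnion_of_summable_integral_norm (fun n => (hpiece n).1) hsummableNorm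
  have hgint : Integrable g μ := by
    rw [← integrableOn_univ, ← hFunion]
    exact hUint
  have hHas : HasSum (fun n => ∫ y in F n, g y ∂μ) (∫ y, g y ∂μ) := by
    have h := hasSum_integral_iUnion hFmeas hFdisj hUint
    rwa [hFunion, setIntegral_univ] at h
  have hSummableI : Summable (fun n => C n * M n) :=
    hHas.summable.congr (fun n => (hpiece n).2.1)
  have hIeq : (∫ y, g y ∂μ) = ∑' n, C n * M n := by
    rw [← hHas.tsum_eq]
    exact tsum_congr (fun n => (hpiece n).2.1)
  have hWe : ∀ j : ℤ, (∑' n : ℕ, e (j + n) * V (j + n)) = W j := by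
    intro j
    simp only [hW, he]
  have hterm : ∀ n : ℕ, C (n+3) * M (n+3) =
      (0 - φ i x) * (e (k+1+n) * V (k+1+n) - q * (e (k+n) * V (k+n))) := by
    intro n
    rw [hC3 n, hM3 n, show k+1+(n:ℤ) = (k+(n:ℤ))+1 by ring, hqe]
    ring
  have htailval : (∑' n : ℕ, C (n+3) * M (n+3)) = (0 - φ i x) * (W (k+1) - q * W k) := by
    calc (∑' n : ℕ, C (n+3) * M (n+3))
        = ∑' n : ℕ, (0 - φ i x) * (e (k+1+n) * V (k+1+n) - q * (e (k+n) * V (k+n))) :=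
          tsum_congr hterm
      _ = (0 - φ i x) * ∑' n : ℕ, (e (k+1+n) * V (k+1+n) - q * (e (k+n) * V (k+n))) :=
          tsum_mul_left
      _ = (0 - φ i x) * ((∑' n : ℕ, e (k+1+n) * V (k+1+n)) -
            ∑' n : ℕ, q * (e (k+n) * V (k+n))) := by
          rw [Summable.tsum_sub he1 (hek.mul_left q)]
      _ = (0 - φ i x) * (W (k+1) - q * W k) := by
          rw [tsum_mul_left, hWe (k+1), hWe k]
  have hWk : W k = e k * V k + W (k+1) := by
    rw [← hWe k, ← hWe (k+1), Summable.tsum_eq_zero_add hek]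
    congr 1
    · norm_num
    · apply tsum_congr
      intro n
      have hcast : k + ((n+1 : ℕ):ℤ) = (k+1) + n := by push_cast; ring
      rw [hcast]
  have hWk' : W (k+1) = W k - e k * V k := by rw [hWk]; ring
  have hfin : (∫ y, g y ∂μ) = (-(1 - q) * W k) * φ i x := by
    rw [hIeq, ← Summable.sum_add_tsum_nat_add 3 hSummableI, htailval, hWk']
    simp only [Finset.sum_range_succ, Finset.sum_range_zero]
    rw [hC0, hC1, hC2, hM0, hM1, hM2]
    linear_combination (e k) * hmean
  refine ⟨hgint, ?_⟩
  rw [hfin]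
  by_cases hxi : ‖x‖ ≤ (p:ℝ)^i
  · have hik : k = i := by rw [hk, if_pos hxi]
    rw [hik]
  · have h0 : φ i x = 0 := hφ0 x (not_le.mp hxi)
    rw [h0, mul_zero, mul_zero]
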